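/- Borchardt's identity: det(1/(1-a_p b_q))_{p,q=1}^n · per(1/(1-a_p b_q))_{p,q=1}^n = det(1/(1-a_p b_q)^2)_{p,q=1}^n. -/

import Mathlib

open Finset Polynomial Equiv

noncomputable def myPer {n : ℕ} {R : Type} [CommRing R] (M : Matrix (Fin n) (Fin n) R) : R :=
  ∑ σ : Equiv.Perm (Fin n), ∏ j, M j (σ j)

theorem myPer_fin_zero {R : Type} [CommRing R] (M : Matrix (Fin 0) (Fin 0) R) : myPer M = 1 := by
  simp [myPer]

theorem myPer_map {n : ℕ} {R S : Type} [CommRing R] [CommRing S] (f : R →+* S)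
    (M : Matrix (Fin n) (Fin n) R) : myPer (M.map f) = f (myPer M) := by
  simp [myPer, map_sum, map_prod, Matrix.map_apply]

theorem myPer_smul_rows {n : ℕ} {R : Type} [CommRing R] (v : Fin n → R)
    (M : Matrix (Fin n) (Fin n) R) :
    myPer (Matrix.of fun p q => v p * M p q) = (∏ p, v p) * myPer M := by
  rw [myPer, myPer, Finset.mul_sum]
  refine Finset.sum_congr rfl fun σ _ => ?_
  rw [← Finset.prod_mul_distrib]
  rfl

theorem det_smul_rows {n : ℕ} {R : Type} [CommRing R] (v : Fin n → R)
    (M : Matrix (Fin n) (Fin n) R) :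
    Matrix.det (Matrix.of fun p q => v p * M p q) = (∏ p, v p) * Matrix.det M := by
  have : (Matrix.of fun p q => v p * M p q) = Matrix.diagonal v * M := by
    ext p q
    simp [Matrix.mul_apply, Matrix.diagonal, Finset.sum_ite_eq]
  rw [this, Matrix.det_mul, Matrix.det_diagonal]

theorem myPer_succ_row_zero {n : ℕ} {R : Type} [CommRing R]
    (M : Matrix (Fin (n+1)) (Fin (n+1)) R) :
    myPer M = ∑ j : Fin (n+1), M 0 j * myPer (M.submatrix Fin.succ j.succAbove) := by
  rw [myPer, ← Equiv.Perm.decomposeFin.symm.sum_comp, Fintype.sum_prod_type]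
  refine Finset.sum_congr rfl fun j _ => ?_
  have key : ∀ e : Equiv.Perm (Fin n), ∏ i, M i (Equiv.Perm.decomposeFin.symm (j, e) i)
      = M 0 j * ∏ i : Fin n, M i.succ (Equiv.swap 0 j (e i).succ) := by
    intro e
    rw [Fin.prod_univ_succ]
    simp
  simp_rw [key]
  rw [← Finset.mul_sum]
  congr 1
  induction j using Fin.cases with
  | zero =>
    rw [myPer]
    refine Finset.sum_congr rfl fun e _ => Finset.prod_congr rfl fun i _ => ?_
    simp [Matrix.submatrix_apply]
  | succ q =>
    rw [myPer]
    refine Fintype.sum_equiv (Equiv.mulLeft q.cycleRange) _ _ fun e => ?_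
    refine Finset.prod_congr rfl fun i _ => ?_
    simp only [Matrix.submatrix_apply, Equiv.coe_mulLeft, Equiv.Perm.mul_apply,
      Fin.succAbove_cycleRange]

theorem natDegree_det_le {m : ℕ} (A : Matrix (Fin m) (Fin m) ℂ[X]) (d : Fin m → ℕ)
    (h : ∀ p q, (A p q).natDegree ≤ d p) : A.det.natDegree ≤ ∑ p, d p := by
  rw [Matrix.det_apply]
  refine Polynomial.natDegree_sum_le_of_forall_le _ _ fun σ _ => ?_
  have h1 : (∏ i, A (σ i) i).natDegree ≤ ∑ p, d p := by
    refine (Polynomial.natDegree_prod_le _ _).trans ?_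
    calc ∑ i, (A (σ i) i).natDegree ≤ ∑ i, d (σ i) := Finset.sum_le_sum fun i _ => h _ _
    _ = ∑ p, d p := Equiv.sum_comp σ d
  rcases Int.units_eq_one_or (Equiv.Perm.sign σ) with hs | hs <;> rw [hs]
  · rwa [one_smul]
  · rw [Units.smul_def]
    simpa using h1

theorem natDegree_myPer_le {m : ℕ} (A : Matrix (Fin m) (Fin m) ℂ[X]) (d : Fin m → ℕ)
    (h : ∀ p q, (A p q).natDegree ≤ d p) : (myPer A).natDegree ≤ ∑ p, d p := by
  rw [myPer]
  refine Polynomial.natDegree_sum_le_of_forall_le _ _ fun σ _ => ?_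
  refine (Polynomial.natDegree_prod_le _ _).trans ?_
  calc ∑ i, (A i (σ i)).natDegree ≤ ∑ i, d i := Finset.sum_le_sum fun i _ => h _ _
  _ = ∑ p, d p := rfl

theorem borchardt_generic (n : ℕ) (a b : Fin n → ℂ)
    (h : ∀ p q, a p * b q ≠ 1) (ha : Function.Injective a) (hb : Function.Injective b)
    (hb0 : ∀ q, b q ≠ 0) :
    (Matrix.of fun p q => (1 - a p * b q)⁻¹).det * myPer (Matrix.of fun p q => (1 - a p * b q)⁻¹)
      = (Matrix.of fun p q => ((1 - a p * b q)⁻¹) ^ 2).det := by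
  induction n with
  | zero => simp [Matrix.det_fin_zero, myPer_fin_zero]
  | succ n IH =>
    have hc : ∀ p q, (1 : ℂ) - a p * b q ≠ 0 := fun p q => sub_ne_zero.2 fun e => h p q e.symm
    set c : Fin (n+1) → Fin (n+1) → ℂ := fun p q => (1 - a p * b q)⁻¹ with hcdef
    set R0 : Fin (n+1) → ℂ[X] := fun q => ∏ r ∈ univ.erase q, (1 - C (b r) * X) with hR0
    set Ap : Matrix (Fin (n+1)) (Fin (n+1)) ℂ[X] :=
      Matrix.of fun p q => if p = 0 then R0 q else C (c p q) with hAp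
    set Bp : Matrix (Fin (n+1)) (Fin (n+1)) ℂ[X] :=
      Matrix.of fun p q => if p = 0 then (R0 q) ^ 2 else C ((c p q) ^ 2) with hBp
    set F : ℂ[X] := Ap.det * myPer Ap - Bp.det with hF
    -- clearing identity for evaluation at a p₀
    have hclear : ∀ p₀ q, Polynomial.eval (a p₀) (R0 q)
        = (∏ r, (1 - a p₀ * b r)) * c p₀ q := by
      intro p₀ q
      have he : Polynomial.eval (a p₀) (R0 q) = ∏ r ∈ univ.erase q, (1 - a p₀ * b r) := by
        rw [hR0, eval_prod]
        refine Finset.prod_congr rfl fun r _ => ?_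
        rw [eval_sub, eval_one, eval_mul, eval_C, eval_X, mul_comm]
      have hcq : c p₀ q = (1 - a p₀ * b q)⁻¹ := rfl
      rw [he, hcq, ← Finset.prod_erase_mul univ _ (mem_univ q), mul_assoc,
        mul_inv_cancel₀ (hc p₀ q), mul_one]
    -- degree bound
    have hdegR : ∀ q, (R0 q).natDegree ≤ n := by
      intro q
      refine (Polynomial.natDegree_prod_le _ _).trans ?_
      have : ∀ r ∈ univ.erase q, ((1 : ℂ[X]) - C (b r) * X).natDegree ≤ 1 := by
        intro r _
        refine (Polynomial.natDegree_sub_le _ _).trans ?_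
        simp only [natDegree_one, max_le_iff]
        exact ⟨Nat.zero_le 1, (Polynomial.natDegree_mul_le).trans (by simp)⟩
      refine (Finset.sum_le_sum this).trans ?_
      simp [Finset.card_erase_of_mem]
    have hsum : ∀ m : ℕ, (∑ p : Fin (n+1), if p = 0 then m else 0) = m := by
      intro m
      rw [Fin.sum_univ_succ]
      simp [Fin.succ_ne_zero]
    have hdegA : Ap.det.natDegree ≤ n := by
      have := natDegree_det_le Ap (fun p => if p = 0 then n else 0) ?_
      · rwa [hsum] at this
      · intro p q
        by_cases h0 : p = 0 <;> simp [hAp, h0, hdegR, Fin.succ_ne_zero]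
    have hdegP : (myPer Ap).natDegree ≤ n := by
      have := natDegree_myPer_le Ap (fun p => if p = 0 then n else 0) ?_
      · rwa [hsum] at this
      · intro p q
        by_cases h0 : p = 0 <;> simp [hAp, h0, hdegR, Fin.succ_ne_zero]
    have hdegB : Bp.det.natDegree ≤ 2 * n := by
      have := natDegree_det_le Bp (fun p => if p = 0 then 2 * n else 0) ?_
      · rwa [hsum] at this
      · intro p q
        by_cases h0 : p = 0
        · simp only [hBp, Matrix.of_apply, h0, if_pos]
          refine (Polynomial.natDegree_pow_le).trans ?_
          have := hdegR q
          omega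
        · simp [hBp, h0]
    have hdegF : F.natDegree ≤ 2 * n := by
      refine (Polynomial.natDegree_sub_le _ _).trans ?_
      refine max_le ((Polynomial.natDegree_mul_le).trans ?_) hdegB
      omega
    have evF : ∀ x : ℂ, Polynomial.eval x F
        = (Ap.map (evalRingHom x)).det * myPer (Ap.map (evalRingHom x))
          - (Bp.map (evalRingHom x)).det := by
      intro x
      rw [hF, eval_sub, eval_mul, ← coe_evalRingHom, RingHom.map_det, RingHom.map_det,
        ← myPer_map]
      simp only [RingHom.mapMatrix_apply]
    -- evaluation at the (2n+1) points
    have heval : ∀ i : Fin n ⊕ Fin (n+1),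
        Polynomial.eval (Sum.elim (fun p => a p.succ) (fun q => (b q)⁻¹) i) F = 0 := by
      rintro (p | q)
      · simp only [Sum.elim_inl]
        rw [evF]
        have hrowp : (Ap.map (evalRingHom (a p.succ))) p.succ = fun q => c p.succ q := by
          funext q
          simp only [Matrix.map_apply, hAp, Matrix.of_apply, if_neg (Fin.succ_ne_zero p),
            coe_evalRingHom, eval_C]
        have hrowpB : (Bp.map (evalRingHom (a p.succ))) p.succ = fun q => (c p.succ q) ^ 2 := by
          funext q
          simp only [Matrix.map_apply, hBp, Matrix.of_apply, if_neg (Fin.succ_ne_zero p),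
            coe_evalRingHom, eval_C]
        have hdetA : (Ap.map (evalRingHom (a p.succ))).det = 0 := by
          set M := Ap.map (evalRingHom (a p.succ)) with hM
          have hrow0 : M 0 = (∏ r, (1 - a p.succ * b r)) • fun q => c p.succ q := by
            funext q
            simp only [hM, Matrix.map_apply, hAp, Matrix.of_apply, if_pos rfl, eq_self_iff_true, if_true,
              coe_evalRingHom, Pi.smul_apply, smul_eq_mul]
            exact hclear p.succ q
          calc M.det = (Matrix.updateRow M 0 (M 0)).det := by rw [Matrix.updateRow_eq_self]
          _ = (∏ r, (1 - a p.succ * b r))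
              * (Matrix.updateRow M 0 (fun q => c p.succ q)).det := by
            rw [hrow0, Matrix.det_updateRow_smul]
          _ = 0 := by
            rw [mul_eq_zero]
            right
            refine Matrix.det_zero_of_row_eq (Fin.succ_ne_zero p).symm ?_
            rw [Matrix.updateRow_self, Matrix.updateRow_ne (Fin.succ_ne_zero p), hrowp]
        have hdetB : (Bp.map (evalRingHom (a p.succ))).det = 0 := by
          set M := Bp.map (evalRingHom (a p.succ)) with hM
          have hrow0 : M 0 = ((∏ r, (1 - a p.succ * b r)) ^ 2) • fun q => (c p.succ q) ^ 2 := by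
            funext q
            simp only [hM, Matrix.map_apply, hBp, Matrix.of_apply, if_pos rfl, eq_self_iff_true, if_true,
              coe_evalRingHom, Pi.smul_apply, smul_eq_mul, eval_pow]
            rw [hclear p.succ q, mul_pow]
          calc M.det = (Matrix.updateRow M 0 (M 0)).det := by rw [Matrix.updateRow_eq_self]
          _ = ((∏ r, (1 - a p.succ * b r)) ^ 2)
              * (Matrix.updateRow M 0 (fun q => (c p.succ q) ^ 2)).det := by
            rw [hrow0, Matrix.det_updateRow_smul]
          _ = 0 := by
            rw [mul_eq_zero]
            right
            refine Matrix.det_zero_of_row_eq (Fin.succ_ne_zero p).symm ?_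
            rw [Matrix.updateRow_self, Matrix.updateRow_ne (Fin.succ_ne_zero p), hrowpB]
        rw [hdetA, hdetB, zero_mul, sub_zero]
      · simp only [Sum.elim_inr]
        rw [evF]
        set M := Ap.map (evalRingHom ((b q)⁻¹)) with hM
        set Mb := Bp.map (evalRingHom ((b q)⁻¹)) with hMb
        have hzero : ∀ j, j ≠ q → Polynomial.eval ((b q)⁻¹) (R0 j) = 0 := by
          intro j hj
          rw [hR0, eval_prod]
          refine Finset.prod_eq_zero (Finset.mem_erase.2 ⟨Ne.symm hj, mem_univ q⟩) ?_
          rw [eval_sub, eval_one, eval_mul, eval_C, eval_X, mul_inv_cancel₀ (hb0 q), sub_self]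
        have hsub : M.submatrix Fin.succ q.succAbove
            = Matrix.of (fun p r => (1 - (a ∘ Fin.succ) p * (b ∘ q.succAbove) r)⁻¹) := by
          ext p r
          simp only [Matrix.submatrix_apply, hM, Matrix.map_apply, hAp, Matrix.of_apply,
            if_neg (Fin.succ_ne_zero p), coe_evalRingHom, eval_C, Function.comp]
          rfl
        have hsubB : Mb.submatrix Fin.succ q.succAbove
            = Matrix.of (fun p r => ((1 - (a ∘ Fin.succ) p * (b ∘ q.succAbove) r)⁻¹) ^ 2) := by
          ext p r
          simp only [Matrix.submatrix_apply, hMb, Matrix.map_apply, hBp, Matrix.of_apply,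
            if_neg (Fin.succ_ne_zero p), coe_evalRingHom, eval_C, Function.comp]
          rfl
        have hM0 : ∀ j, j ≠ q → M 0 j = 0 := by
          intro j hj
          simp only [hM, Matrix.map_apply, hAp, Matrix.of_apply, if_pos rfl, eq_self_iff_true, if_true, coe_evalRingHom]
          exact hzero j hj
        have hMb0 : ∀ j, j ≠ q → Mb 0 j = 0 := by
          intro j hj
          simp only [hMb, Matrix.map_apply, hBp, Matrix.of_apply, if_pos rfl, eq_self_iff_true, if_true, coe_evalRingHom,
            eval_pow]
          rw [hzero j hj]
          ring
        have hMbq : Mb 0 q = (M 0 q) ^ 2 := by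
          simp only [hM, hMb, Matrix.map_apply, hAp, hBp, Matrix.of_apply, if_pos rfl, eq_self_iff_true, if_true,
            coe_evalRingHom, eval_pow]
        have hdetM : M.det = (-1) ^ (q : ℕ) * M 0 q * (M.submatrix Fin.succ q.succAbove).det := by
          rw [Matrix.det_succ_row_zero]
          refine Finset.sum_eq_single q (fun j _ hj => ?_) (fun hq => absurd (mem_univ q) hq)
          rw [hM0 j hj, mul_zero, zero_mul]
        have hperM : myPer M = M 0 q * myPer (M.submatrix Fin.succ q.succAbove) := by
          rw [myPer_succ_row_zero]
          refine Finset.sum_eq_single q (fun j _ hj => ?_) (fun hq => absurd (mem_univ q) hq)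
          rw [hM0 j hj, zero_mul]
        have hdetMb : Mb.det
            = (-1) ^ (q : ℕ) * Mb 0 q * (Mb.submatrix Fin.succ q.succAbove).det := by
          rw [Matrix.det_succ_row_zero]
          refine Finset.sum_eq_single q (fun j _ hj => ?_) (fun hq => absurd (mem_univ q) hq)
          rw [hMb0 j hj, mul_zero, zero_mul]
        have hIH := IH (a ∘ Fin.succ) (b ∘ q.succAbove) (fun p r => h _ _)
          (ha.comp (Fin.succ_injective n)) (hb.comp Fin.succAbove_right_injective)
          (fun r => hb0 _)
        rw [hdetM, hperM, hdetMb, hsub, hsubB, hMbq]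
        linear_combination ((-1 : ℂ) ^ (q : ℕ) * (M 0 q) ^ 2) * hIH
    have hinj : Function.Injective (Sum.elim (fun p : Fin n => a p.succ)
        (fun q : Fin (n+1) => (b q)⁻¹)) := by
      rintro (p | p) (q | q) hpq
      · simp only [Sum.elim_inl] at hpq
        exact congrArg Sum.inl (Fin.succ_injective n (ha hpq))
      · exfalso
        simp only [Sum.elim_inl, Sum.elim_inr] at hpq
        exact h p.succ q (by rw [hpq, inv_mul_cancel₀ (hb0 q)])
      · exfalso
        simp only [Sum.elim_inl, Sum.elim_inr] at hpq
        exact h q.succ p (by rw [← hpq, inv_mul_cancel₀ (hb0 p)])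
      · simp only [Sum.elim_inr] at hpq
        exact congrArg Sum.inr (hb (inv_injective hpq))
    have hF0 : F = 0 := by
      refine Polynomial.eq_zero_of_natDegree_lt_card_of_eval_eq_zero F hinj heval ?_
      simp only [Fintype.card_sum, Fintype.card_fin]
      omega
    -- now evaluate at a 0
    have hfin : Polynomial.eval (a 0) F = 0 := by rw [hF0]; simp
    rw [evF] at hfin
    have hA0 : Ap.map (evalRingHom (a 0))
        = Matrix.of fun p q => (if p = 0 then (∏ r, (1 - a 0 * b r)) else 1) * c p q := by
      ext p q
      by_cases h0 : p = 0
      · subst h0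
        simp only [Matrix.map_apply, hAp, Matrix.of_apply, if_pos rfl, eq_self_iff_true, if_true, coe_evalRingHom]
        exact hclear 0 q
      · simp [hAp, h0]
    have hB0 : Bp.map (evalRingHom (a 0))
        = Matrix.of fun p q => (if p = 0 then (∏ r, (1 - a 0 * b r)) ^ 2 else 1)
          * (c p q) ^ 2 := by
      ext p q
      by_cases h0 : p = 0
      · subst h0
        simp only [Matrix.map_apply, hBp, Matrix.of_apply, if_pos rfl, eq_self_iff_true, if_true, coe_evalRingHom, eval_pow]
        rw [hclear 0 q, mul_pow]
      · simp [hBp, h0]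
    have hprod1 : (∏ p : Fin (n+1), if p = 0 then (∏ r, (1 - a 0 * b r)) else 1)
        = ∏ r, (1 - a 0 * b r) := by
      rw [Fin.prod_univ_succ]
      simp [Fin.succ_ne_zero]
    have hprod2 : (∏ p : Fin (n+1), if p = 0 then (∏ r, (1 - a 0 * b r)) ^ 2 else 1)
        = (∏ r, (1 - a 0 * b r)) ^ 2 := by
      rw [Fin.prod_univ_succ]
      simp [Fin.succ_ne_zero]
    rw [hA0, hB0, det_smul_rows (M := (c : Matrix (Fin (n+1)) (Fin (n+1)) ℂ)),
      myPer_smul_rows (M := (c : Matrix (Fin (n+1)) (Fin (n+1)) ℂ)),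
      det_smul_rows (M := ((fun p q => (c p q) ^ 2) : Matrix (Fin (n+1)) (Fin (n+1)) ℂ)),
      hprod1, hprod2] at hfin
    have hK0 : (∏ r, (1 - a 0 * b r)) ≠ 0 := Finset.prod_ne_zero_iff.2 fun r _ => hc 0 r
    have hmain : ((∏ r, (1 - a 0 * b r)) ^ 2) * (Matrix.det c * myPer c)
        = ((∏ r, (1 - a 0 * b r)) ^ 2) * Matrix.det (fun p q => (c p q) ^ 2) := by
      linear_combination hfin
    have hfinal := mul_left_cancel₀ (pow_ne_zero 2 hK0) hmain
    exact hfinal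

theorem borchardt_all (n : ℕ) (a b : Fin n → ℂ) (h : ∀ p q, a p * b q ≠ 1) :
    (Matrix.of fun p q => (1 - a p * b q)⁻¹).det * myPer (Matrix.of fun p q => (1 - a p * b q)⁻¹)
      = (Matrix.of fun p q => ((1 - a p * b q)⁻¹) ^ 2).det := by
  classical
  set av : ℂ → Fin n → ℂ := fun t p => a p + (p.val : ℂ) * t with hav
  set bv : ℂ → Fin n → ℂ := fun t q => b q + ((q.val : ℂ) + 1) * t with hbv
  set PA : Fin n → ℂ[X] := fun p => C (a p) + C (p.val : ℂ) * X with hPA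
  set PB : Fin n → ℂ[X] := fun q => C (b q) + C ((q.val : ℂ) + 1) * X with hPB
  have hevA : ∀ (t : ℂ) (p), Polynomial.eval t (PA p) = av t p := by
    intro t p; simp [hPA, hav]
  have hevB : ∀ (t : ℂ) (q), Polynomial.eval t (PB q) = bv t q := by
    intro t q; simp [hPB, hbv]
  set Chat : Matrix (Fin n) (Fin n) ℂ[X] :=
    Matrix.of fun p q => ∏ r ∈ univ.erase q, (1 - PA p * PB r) with hChat
  set G : ℂ[X] := Chat.det * myPer Chat - (Matrix.of fun p q => (Chat p q) ^ 2).det with hG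
  -- unpacking the evaluation of G at a point t where no denominator vanishes
  have unpack : ∀ t : ℂ, (∀ p q, av t p * bv t q ≠ 1) →
      Polynomial.eval t G
        = ((∏ p, ∏ r, (1 - av t p * bv t r)) ^ 2) *
          ((Matrix.of fun p q => (1 - av t p * bv t q)⁻¹).det
            * myPer (Matrix.of fun p q => (1 - av t p * bv t q)⁻¹)
            - (Matrix.of fun p q => ((1 - av t p * bv t q)⁻¹) ^ 2).det) := by
    intro t ht
    have hne : ∀ p q, (1 : ℂ) - av t p * bv t q ≠ 0 := fun p q =>
      sub_ne_zero.2 fun e => ht p q e.symm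
    have hu : ∀ p q, Polynomial.eval t ((1 : ℂ[X]) - PA p * PB q) = 1 - av t p * bv t q := by
      intro p q
      rw [eval_sub, eval_one, eval_mul, hevA, hevB]
    have hCh : Chat.map (evalRingHom t) = Matrix.of fun p q =>
        (∏ r, (1 - av t p * bv t r))
          * (Matrix.of fun p' q' => (1 - av t p' * bv t q')⁻¹) p q := by
      ext p q
      simp only [Matrix.map_apply, hChat, Matrix.of_apply, coe_evalRingHom, eval_prod]
      rw [Finset.prod_congr rfl fun r _ => hu p r]
      rw [← Finset.prod_erase_mul univ _ (mem_univ q), mul_assoc,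
        mul_inv_cancel₀ (hne p q), mul_one]
    have hCh2 : (Matrix.of fun p q => (Chat p q) ^ 2).map (evalRingHom t)
        = Matrix.of fun p q => ((∏ r, (1 - av t p * bv t r)) ^ 2)
          * (Matrix.of fun p' q' => ((1 - av t p' * bv t q')⁻¹) ^ 2) p q := by
      ext p q
      simp only [Matrix.map_apply, hChat, Matrix.of_apply, coe_evalRingHom, eval_pow, eval_prod]
      rw [Finset.prod_congr rfl fun r _ => hu p r]
      rw [← Finset.prod_erase_mul univ _ (mem_univ q)]
      rw [mul_pow, mul_assoc, ← mul_pow, mul_inv_cancel₀ (hne p q), one_pow, mul_one]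
    have hevalG : Polynomial.eval t G
        = (Chat.map (evalRingHom t)).det * myPer (Chat.map (evalRingHom t))
          - ((Matrix.of fun p q => (Chat p q) ^ 2).map (evalRingHom t)).det := by
      rw [hG, eval_sub, eval_mul, ← coe_evalRingHom, RingHom.map_det, RingHom.map_det,
        ← myPer_map]
      simp only [RingHom.mapMatrix_apply]
    rw [hevalG, hCh, hCh2, det_smul_rows, myPer_smul_rows, det_smul_rows, Finset.prod_pow]
    ring
  -- G vanishes on the cofinite set of good parameters
  have hGzero : ∀ t : ℂ, (∀ p q, av t p * bv t q ≠ 1) → Function.Injective (av t) →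
      Function.Injective (bv t) → (∀ q, bv t q ≠ 0) → Polynomial.eval t G = 0 := by
    intro t h1 h2 h3 h4
    rw [unpack t h1, borchardt_generic n (av t) (bv t) h1 h2 h3 h4, sub_self, mul_zero]
  -- the bad set is finite
  set bad : Set ℂ :=
    (⋃ p, ⋃ q, {t | Polynomial.eval t ((1 : ℂ[X]) - PA p * PB q) = 0})
    ∪ (⋃ p, ⋃ p', {t | p ≠ p' ∧ Polynomial.eval t (PA p - PA p') = 0})
    ∪ (⋃ q, ⋃ q', {t | q ≠ q' ∧ Polynomial.eval t (PB q - PB q') = 0})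
    ∪ (⋃ q, {t | Polynomial.eval t (PB q) = 0}) with hbad
  have hroots : ∀ P : ℂ[X], P ≠ 0 → {t | Polynomial.eval t P = 0}.Finite := by
    intro P hP
    exact Polynomial.finite_setOf_isRoot hP
  have hbadfin : bad.Finite := by
    rw [hbad]
    refine (((Set.Finite.union ?_ ?_).union ?_).union ?_)
    · refine Set.finite_iUnion fun p => Set.finite_iUnion fun q => hroots _ ?_
      intro h0
      have := congrArg (Polynomial.eval 0) h0
      simp [hPA, hPB] at this
      exact h p q (by linear_combination -this)
    · refine Set.finite_iUnion fun p => Set.finite_iUnion fun p' => ?_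
      by_cases hpp : p = p'
      · simp [hpp]
      · refine ((hroots _ ?_).subset fun t htm => htm.2)
        intro h0
        have := congrArg (fun P => Polynomial.coeff P 1) h0
        simp [hPA] at this
        rw [sub_eq_zero] at this
        exact hpp (Fin.val_injective (Nat.cast_injective this))
    · refine Set.finite_iUnion fun q => Set.finite_iUnion fun q' => ?_
      by_cases hqq : q = q'
      · simp [hqq]
      · refine ((hroots _ ?_).subset fun t htm => htm.2)
        intro h0
        have := congrArg (fun P => Polynomial.coeff P 1) h0
        simp [hPB] at this
        rw [sub_eq_zero] at this
        exact hqq (Fin.val_injective (Nat.cast_injective this))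
    · refine Set.finite_iUnion fun q => hroots _ ?_
      intro h0
      have := congrArg (fun P => Polynomial.coeff P 1) h0
      simp [hPB] at this
      exact Nat.cast_add_one_ne_zero q.val this
  -- outside bad, t is good
  have hgood : ∀ t : ℂ, t ∉ bad → Polynomial.eval t G = 0 := by
    intro t htb
    rw [hbad] at htb
    simp only [Set.mem_union, Set.mem_iUnion, Set.mem_setOf_eq, not_or, not_exists] at htb
    obtain ⟨⟨⟨hb1, hb2⟩, hb3⟩, hb4⟩ := htb
    refine hGzero t (fun p q hpq => hb1 p q ?_) (fun p p' hpp' => ?_) (fun q q' hqq' => ?_)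
      (fun q hq0 => hb4 q ?_)
    · rw [eval_sub, eval_one, eval_mul, hevA, hevB, hpq, sub_self]
    · by_contra hne
      exact hb2 p p' ⟨hne, by rw [eval_sub, hevA, hevA, hpp', sub_self]⟩
    · by_contra hne
      exact hb3 q q' ⟨hne, by rw [eval_sub, hevB, hevB, hqq', sub_self]⟩
    · rw [hevB, hq0]
  have hG0 : G = 0 := by
    refine Polynomial.eq_zero_of_infinite_isRoot G ?_
    refine Set.Infinite.mono ?_ (hbadfin.infinite_compl)
    intro t ht
    exact hgood t ht
  -- evaluate at 0
  have h0 : ∀ p q, av 0 p * bv 0 q ≠ 1 := by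
    intro p q
    simp only [hav, hbv, mul_zero, add_zero]
    exact h p q
  have hval := unpack 0 h0
  rw [hG0] at hval
  simp only [eval_zero] at hval
  have hKne : ((∏ p, ∏ r, (1 - av 0 p * bv 0 r)) ^ 2) ≠ 0 := by
    refine pow_ne_zero 2 (Finset.prod_ne_zero_iff.2 fun p _ => Finset.prod_ne_zero_iff.2
      fun r _ => sub_ne_zero.2 fun e => h0 p r e.symm)
  have hdiff := (mul_eq_zero.mp hval.symm).resolve_left hKne
  have hfix : av 0 = a := by funext p; simp [hav]
  have hfixb : bv 0 = b := by funext q; simp [hbv]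
  rw [hfix, hfixb] at hdiff
  exact sub_eq_zero.mp hdiff

/-- The permanent of a square matrix. -/
noncomputable def permanent {n : ℕ} (M : Matrix (Fin n) (Fin n) ℂ) : ℂ :=
  ∑ σ : Equiv.Perm (Fin n), ∏ j, M j (σ j)

theorem borchardt_identity (n : ℕ) (a b : Fin n → ℂ)
    (h : ∀ p q, a p * b q ≠ 1) :
    Matrix.det (Matrix.of fun p q : Fin n => (1 - a p * b q)⁻¹) *
      permanent (Matrix.of fun p q : Fin n => (1 - a p * b q)⁻¹) =
    Matrix.det (Matrix.of fun p q : Fin n => ((1 - a p * b q) ^ 2)⁻¹) := by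
  have hmain := borchardt_all n a b h
  have hperm : permanent (Matrix.of fun p q : Fin n => (1 - a p * b q)⁻¹)
      = myPer (Matrix.of fun p q : Fin n => (1 - a p * b q)⁻¹) := rfl
  have hsq : (Matrix.of fun p q : Fin n => ((1 - a p * b q) ^ 2)⁻¹)
      = (Matrix.of fun p q : Fin n => ((1 - a p * b q)⁻¹) ^ 2) := by
    ext p q
    exact (inv_pow _ 2).symm
  rw [hperm, hsq]
  exact hmain
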